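/- For every Motzkin path p = p₁⋯pₙ, the area satisfies ar(p) = Σ_{k : p_k = D} k − Σ_{i : p_i = U} i. -/

import Mathlib

/-- The three kinds of steps of a Motzkin path. -/
inductive Step : Type
  | U : Step
  | D : Step
  | H : Step
deriving DecidableEq
instance : Fintype Step :=
  Fintype.ofList [Step.U, Step.D, Step.H] (fun x => by cases x <;> simp)
/-- Number of indices `i` with `i < m` (i.e. in the prefix of length `m`,
with 0-based indexing) at which the word `p` has the letter `s`. -/
def countIn {n : ℕ} (p : Fin n → Step) (s : Step) (m : ℕ) : ℕ :=
  (Finset.univ.filter (fun i : Fin n => (i : ℕ) < m ∧ p i = s)).card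
/-- A word `p` of length `n` over `{U, D, H}` is a Motzkin path if every
prefix contains at least as many `U`'s as `D`'s and the whole word contains
equally many `U`'s and `D`'s. -/
def IsMotzkin {n : ℕ} (p : Fin n → Step) : Prop :=
  (∀ m ≤ n, countIn p Step.D m ≤ countIn p Step.U m) ∧
  countIn p Step.U n = countIn p Step.D n
/-- The height `h_i` of step `i`: the number of `j ≤ i` with `p_j = U` minus
the number of `j ≤ i` with `p_j = D`, increased by `1` when `p_i = D`. -/
def heightAt {n : ℕ} (p : Fin n → Step) (i : Fin n) : ℕ :=
  ((Finset.univ.filter (fun j : Fin n => j ≤ i ∧ p j = Step.U)).card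
    - (Finset.univ.filter (fun j : Fin n => j ≤ i ∧ p j = Step.D)).card)
    + (if p i = Step.D then 1 else 0)
/-- The area below a Motzkin path:
`ar(p) = ∑_{i : p_i = H} h_i + ∑_{i : p_i ∈ {U,D}} (h_i - 1/2)`. -/
def area {n : ℕ} (p : Fin n → Step) : ℚ :=
  (∑ i ∈ Finset.univ.filter (fun i : Fin n => p i = Step.H),
    (heightAt p i : ℚ))
  + ∑ i ∈ Finset.univ.filter (fun i : Fin n => p i = Step.U ∨ p i = Step.D),
      ((heightAt p i : ℚ) - 1/2)
namespace MotzkinAux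

variable {n : ℕ} (p : Fin n → Step)

/-- The (rational) height of the path after `m` steps. -/
def Hq (m : ℕ) : ℚ := (countIn p Step.U m : ℚ) - (countIn p Step.D m : ℚ)

lemma countIn_cast (s : Step) (m : ℕ) :
    (countIn p s m : ℚ) =
      ∑ i ∈ Finset.univ.filter (fun i : Fin n => p i = s),
        (if (i : ℕ) < m then (1:ℚ) else 0) := by
  rw [countIn, Finset.card_filter, Finset.sum_filter]
  push_cast
  apply Finset.sum_congr rfl
  intro i _
  by_cases h1 : (i:ℕ) < m <;> by_cases h2 : p i = s <;> simp [h1, h2]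

lemma filter_le_eq (i : Fin n) (s : Step) :
    (Finset.univ.filter (fun j : Fin n => j ≤ i ∧ p j = s)).card
      = countIn p s ((i:ℕ)+1) := by
  rw [countIn]
  congr 1
  apply Finset.filter_congr
  intro j _
  simp only [Fin.le_def, Nat.lt_succ_iff]

lemma heightAt_cast (hp : IsMotzkin p) (i : Fin n) :
    (heightAt p i : ℚ) = Hq p ((i:ℕ)+1) + (if p i = Step.D then 1 else 0) := by
  have hle : countIn p Step.D ((i:ℕ)+1) ≤ countIn p Step.U ((i:ℕ)+1) :=
    hp.1 _ i.isLt
  rw [heightAt, filter_le_eq, filter_le_eq, Hq]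
  push_cast [Nat.cast_sub hle]
  split_ifs <;> ring

lemma countIn_succ (s : Step) (i : Fin n) :
    (countIn p s ((i:ℕ)+1) : ℚ)
      = (countIn p s (i:ℕ) : ℚ) + (if p i = s then 1 else 0) := by
  rw [countIn_cast, countIn_cast]
  have key : ∀ j : Fin n,
      (if (j:ℕ) < (i:ℕ)+1 then (1:ℚ) else 0)
        = (if (j:ℕ) < (i:ℕ) then (1:ℚ) else 0) + (if j = i then (1:ℚ) else 0) := by
    intro j
    by_cases h : j = i
    · subst h; simp
    · have : (j:ℕ) ≠ (i:ℕ) := fun hc => h (Fin.ext hc)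
      by_cases h2 : (j:ℕ) < (i:ℕ) <;> simp [h, h2] <;> omega
  simp_rw [key]
  rw [Finset.sum_add_distrib]
  congr 1
  rw [Finset.sum_ite_eq' (Finset.univ.filter (fun i : Fin n => p i = s)) i
    (fun _ => (1:ℚ))]
  simp

lemma Hq_succ (i : Fin n) :
    Hq p ((i:ℕ)+1) = Hq p (i:ℕ) + (if p i = Step.U then (1:ℚ) else 0)
      - (if p i = Step.D then (1:ℚ) else 0) := by
  rw [Hq, Hq, countIn_succ, countIn_succ]
  ring

lemma area_eq_sum_avg (hp : IsMotzkin p) :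
    area p = ∑ i : Fin n, (Hq p (i:ℕ) + Hq p ((i:ℕ)+1)) / 2 := by
  rw [area]
  rw [← Finset.sum_filter_add_sum_filter_not Finset.univ
    (fun i : Fin n => p i = Step.H)
    (fun i : Fin n => (Hq p (i:ℕ) + Hq p ((i:ℕ)+1)) / 2)]
  have hset : Finset.univ.filter (fun i : Fin n => ¬ p i = Step.H)
      = Finset.univ.filter (fun i : Fin n => p i = Step.U ∨ p i = Step.D) := by
    apply Finset.filter_congr
    intro i _
    cases h : p i <;> simp [h]
  rw [hset]
  congr 1
  · apply Finset.sum_congr rfl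
    intro i hi
    have hi' : p i = Step.H := (Finset.mem_filter.mp hi).2
    rw [heightAt_cast p hp i, Hq_succ]
    simp [hi']
  · apply Finset.sum_congr rfl
    intro i hi
    have hi' : p i = Step.U ∨ p i = Step.D := (Finset.mem_filter.mp hi).2
    rw [heightAt_cast p hp i, Hq_succ]
    rcases hi' with h | h <;> simp [h] <;> ring

lemma Hq_zero : Hq p 0 = 0 := by
  simp [Hq, countIn]

lemma Hq_n (hp : IsMotzkin p) : Hq p n = 0 := by
  rw [Hq, hp.2]; ring

lemma sum_avg_eq (hp : IsMotzkin p) :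
    (∑ i : Fin n, (Hq p (i:ℕ) + Hq p ((i:ℕ)+1)) / 2)
      = ∑ m ∈ Finset.range (n+1), Hq p m := by
  rw [Fin.sum_univ_eq_sum_range (fun m => (Hq p m + Hq p (m+1)) / 2) n]
  have h1 : ∑ m ∈ Finset.range (n+1), Hq p m
      = (∑ m ∈ Finset.range n, Hq p m) + Hq p n := Finset.sum_range_succ _ _
  have h2 : ∑ m ∈ Finset.range (n+1), Hq p m
      = (∑ m ∈ Finset.range n, Hq p (m+1)) + Hq p 0 := Finset.sum_range_succ' _ _
  have h3 : ∑ m ∈ Finset.range n, (Hq p m + Hq p (m+1)) / 2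
      = ((∑ m ∈ Finset.range n, Hq p m) + ∑ m ∈ Finset.range n, Hq p (m+1)) / 2 := by
    rw [← Finset.sum_add_distrib, Finset.sum_div]
  rw [h3]
  have := Hq_zero p
  have := Hq_n p hp
  linarith

lemma inner_sum (k : ℕ) (hk : k < n) :
    ∑ m ∈ Finset.range (n+1), (if k < m then (1:ℚ) else 0) = (n:ℚ) - (k:ℚ) := by
  rw [Finset.sum_boole]
  have hfe : (Finset.range (n+1)).filter (fun m => k < m) = Finset.Ico (k+1) (n+1) := by
    ext m
    simp only [Finset.mem_filter, Finset.mem_range, Finset.mem_Ico]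
    omega
  rw [hfe, Nat.card_Ico]
  have h : n + 1 - (k + 1) = n - k := by omega
  rw [h, Nat.cast_sub hk.le]

lemma sum_countIn (s : Step) :
    ∑ m ∈ Finset.range (n+1), (countIn p s m : ℚ)
      = ∑ i ∈ Finset.univ.filter (fun i : Fin n => p i = s), ((n:ℚ) - (i:ℕ)) := by
  simp_rw [countIn_cast]
  rw [Finset.sum_comm]
  apply Finset.sum_congr rfl
  intro i _
  exact inner_sum (i:ℕ) i.isLt

lemma card_eq (hp : IsMotzkin p) :
    (Finset.univ.filter (fun i : Fin n => p i = Step.U)).card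
      = (Finset.univ.filter (fun i : Fin n => p i = Step.D)).card := by
  have h : ∀ s : Step, countIn p s n
      = (Finset.univ.filter (fun i : Fin n => p i = s)).card := by
    intro s
    rw [countIn]
    congr 1
    apply Finset.filter_congr
    intro i _
    simp [i.isLt]
  have := hp.2
  rw [h, h] at this
  exact this

end MotzkinAux

/-- For every Motzkin path `p = p₁⋯pₙ`, the area satisfies
`ar(p) = ∑_{k : p_k = D} k - ∑_{i : p_i = U} i` (positions numbered
`1,…,n`). -/
theorem area_eq_sum_D_sub_sum_U (n : ℕ) (p : Fin n → Step) (hp : IsMotzkin p) :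
    area p =
      (∑ k ∈ Finset.univ.filter (fun k : Fin n => p k = Step.D),
        (((k : ℕ) : ℚ) + 1))
      - ∑ i ∈ Finset.univ.filter (fun i : Fin n => p i = Step.U),
          (((i : ℕ) : ℚ) + 1) := by
  rw [MotzkinAux.area_eq_sum_avg p hp, MotzkinAux.sum_avg_eq p hp]
  simp_rw [MotzkinAux.Hq]
  rw [Finset.sum_sub_distrib, MotzkinAux.sum_countIn, MotzkinAux.sum_countIn]
  simp only [show (∀ S : Finset (Fin n), ∑ i ∈ S, ((n:ℚ) - (i:ℕ)) = S.card * n - ∑ i ∈ S, ((i:ℕ):ℚ)) from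
    fun S => by rw [Finset.sum_sub_distrib, Finset.sum_const, nsmul_eq_mul]]
  rw [Finset.sum_add_distrib, Finset.sum_add_distrib, Finset.sum_const, Finset.sum_const,
    MotzkinAux.card_eq p hp]
  simp only [nsmul_eq_mul, mul_one]
  ring
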